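/- With the action t^r · v(m) = v(m+r) of A and Larsson's action of Der A on F^α(ψ,b) = V(ψ,b)⊗A, one obtains a module for the semidirect product A ⋊ Der A, where [D(u,r), t^m] = (u,m) t^{r+m} and [t^r, t^s] = 0; moreover if V(ψ,b) ≠ 0 then F^α(ψ,b) is an irreducible A ⋊ Der A-module. -/

import Mathlib

/- STATEMENT 13: With the action t^r · v(m) = v(m+r) of A and Larsson's action
of Der A on F^α(ψ,b) = V(ψ,b)⊗A, one obtains a module for the semidirect
product A ⋊ Der A, where [D(u,r), t^m] = (u,m) t^{r+m} and [t^r, t^s] = 0;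
moreover if V(ψ,b) ≠ 0 then F^α(ψ,b) is an irreducible A ⋊ Der A-module. -/

open Finsupp

namespace Stmt13

variable {n : ℕ} {V : Type*} [AddCommGroup V] [Module ℂ V]

noncomputable section

def ell (α : Fin n → ℂ) (u : Fin n → ℂ) (m : Fin n → ℤ) : ℂ :=
  ∑ i, u i * ((m i : ℂ) + α i)

def dot (u : Fin n → ℂ) (r : Fin n → ℤ) : ℂ := ∑ i, u i * (r i : ℂ)

def mat (u : Fin n → ℂ) (r : Fin n → ℤ) : Matrix (Fin n) (Fin n) ℂ :=
  Matrix.of fun j i => u i * (r j : ℂ)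

def Dop (ρgl : Matrix (Fin n) (Fin n) ℂ →ₗ[ℂ] Module.End ℂ V) (α : Fin n → ℂ)
    (u : Fin n → ℂ) (r : Fin n → ℤ) : Module.End ℂ ((Fin n → ℤ) →₀ V) :=
  Finsupp.lsum ℂ fun m => (Finsupp.lsingle (m + r)).comp
    (ell α u m • (LinearMap.id : V →ₗ[ℂ] V) + ρgl (mat u r))

def Top (r : Fin n → ℤ) : Module.End ℂ ((Fin n → ℤ) →₀ V) :=
  Finsupp.lmapDomain V ℂ (· + r)

variable (ρgl : Matrix (Fin n) (Fin n) ℂ →ₗ[ℂ] Module.End ℂ V) (α : Fin n → ℂ)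

lemma Dop_single (u : Fin n → ℂ) (r m : Fin n → ℤ) (v : V) :
    Dop ρgl α u r (Finsupp.single m v) =
      Finsupp.single (m + r) (ell α u m • v + ρgl (mat u r) v) := by
  simp [Dop]

lemma Top_single (r m : Fin n → ℤ) (v : V) :
    (Top r : Module.End ℂ ((Fin n → ℤ) →₀ V)) (Finsupp.single m v) =
      Finsupp.single (m + r) v := by
  simp [Top, Finsupp.lmapDomain_apply, Finsupp.mapDomain_single]

lemma ell_add (u : Fin n → ℂ) (m s : Fin n → ℤ) :
    ell α u (m + s) = ell α u m + dot u s := by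
  rw [ell, ell, dot, ← Finset.sum_add_distrib]
  refine Finset.sum_congr rfl fun i _ => ?_
  push_cast [Pi.add_apply]
  ring

lemma ell_comb (u v : Fin n → ℂ) (a b : ℂ) (m : Fin n → ℤ) :
    ell α (a • u - b • v) m = a * ell α u m - b * ell α v m := by
  rw [ell, ell, ell, Finset.mul_sum, Finset.mul_sum, ← Finset.sum_sub_distrib]
  refine Finset.sum_congr rfl fun i _ => ?_
  simp only [Pi.smul_apply, Pi.sub_apply, smul_eq_mul]
  ring

lemma mat_key (u v : Fin n → ℂ) (r s : Fin n → ℤ) :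
    mat (dot u s • v - dot v r • u) (r + s) =
      dot u s • mat v s - dot v r • mat u r + ⁅mat u r, mat v s⁆ := by
  ext a b
  have h1 : ∑ i, (u i * (r a : ℂ)) * (v b * (s i : ℂ)) = ((r a : ℂ) * v b) * dot u s := by
    rw [dot, Finset.mul_sum]
    exact Finset.sum_congr rfl fun i _ => by ring
  have h2 : ∑ i, (v i * (s a : ℂ)) * (u b * (r i : ℂ)) = ((s a : ℂ) * u b) * dot v r := by
    rw [dot, Finset.mul_sum]
    exact Finset.sum_congr rfl fun i _ => by ring
  simp only [mat, Ring.lie_def, Matrix.sub_apply, Matrix.add_apply, Matrix.smul_apply,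
    Matrix.mul_apply, Matrix.of_apply, smul_eq_mul, Pi.smul_apply, Pi.sub_apply]
  rw [h1, h2]
  push_cast [Pi.add_apply]
  ring

lemma bracket_DD (hρgl : ∀ M N : Matrix (Fin n) (Fin n) ℂ, ρgl ⁅M, N⁆ = ⁅ρgl M, ρgl N⁆)
    (u v : Fin n → ℂ) (r s : Fin n → ℤ) :
    ⁅Dop ρgl α u r, Dop ρgl α v s⁆ = Dop ρgl α (dot u s • v - dot v r • u) (r + s) := by
  apply Finsupp.lhom_ext
  intro m w
  have e1 : m + s + r = m + (r + s) := by rw [add_assoc, add_comm s r]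
  have e2 : m + r + s = m + (r + s) := by rw [add_assoc]
  rw [Ring.lie_def]
  simp only [LinearMap.sub_apply, Module.End.mul_apply, Dop_single, map_add, map_smul, e1, e2,
    ← Finsupp.single_sub]
  congr 1
  rw [mat_key, ell_comb, ell_add, ell_add, map_add, map_sub, map_smul, map_smul, hρgl,
    Ring.lie_def]
  simp only [LinearMap.add_apply, LinearMap.sub_apply, LinearMap.smul_apply,
    Module.End.mul_apply, map_add, map_smul]
  module

lemma bracket_DT (u : Fin n → ℂ) (r m : Fin n → ℤ) :
    ⁅Dop ρgl α u r, (Top (V:=V) m)⁆ = dot u m • (Top (V:=V) (r + m)) := by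
  apply Finsupp.lhom_ext
  intro k w
  have e1 : k + m + r = k + (r + m) := by rw [add_assoc, add_comm m r]
  have e2 : k + r + m = k + (r + m) := by rw [add_assoc]
  rw [Ring.lie_def]
  simp only [LinearMap.sub_apply, Module.End.mul_apply, LinearMap.smul_apply, Dop_single,
    Top_single, map_add, map_smul, e1, e2, ← Finsupp.single_sub, Finsupp.smul_single,
    ell_add]
  congr 1
  module

lemma bracket_TT (r s : Fin n → ℤ) :
    ⁅(Top (V:=V) r), (Top (V:=V) s)⁆ = 0 := by
  apply Finsupp.lhom_ext
  intro k w
  have e1 : k + s + r = k + r + s := by rw [add_assoc, add_comm s r, add_assoc]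
  rw [Ring.lie_def]
  simp [LinearMap.sub_apply, Module.End.mul_apply, Top_single, e1]

lemma mat_zero (u : Fin n → ℂ) : mat u (0 : Fin n → ℤ) = 0 := by
  ext a b; simp [mat]

lemma Dop_zero_apply (u : Fin n → ℂ) (x : (Fin n → ℤ) →₀ V) (m' : Fin n → ℤ) :
    (Dop ρgl α u 0 x) m' = ell α u m' • x m' := by
  induction x using Finsupp.induction_linear with
  | zero => simp
  | add f g hf hg => simp [map_add, hf, hg]
  | single a b =>
    rw [Dop_single, mat_zero, map_zero, add_zero]
    simp only [LinearMap.zero_apply, add_zero, Finsupp.single_apply]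
    split_ifs with h
    · subst h; rfl
    · simp

lemma sep (U : Submodule ℂ ((Fin n → ℤ) →₀ V))
    (hDU : ∀ u r x, x ∈ U → Dop ρgl α u r x ∈ U) :
    ∀ (k : ℕ) (x : (Fin n → ℤ) →₀ V), x.support.card = k → x ∈ U →
      ∀ m₀, Finsupp.single m₀ (x m₀) ∈ U := by
  intro k
  induction k using Nat.strong_induction_on with
  | _ k ih =>
    intro x hcard hx m₀
    by_cases hx0 : x m₀ = 0
    · simp [hx0, U.zero_mem]
    by_cases hsub : x.support ⊆ {m₀}
    · rw [Finsupp.support_subset_singleton] at hsub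
      rw [← hsub]; exact hx
    · obtain ⟨m₁, hm₁, hne⟩ : ∃ m₁ ∈ x.support, m₁ ≠ m₀ := by
        by_contra h
        push_neg at h
        exact hsub fun m hm => Finset.mem_singleton.2 (h m hm)
      obtain ⟨i, hi⟩ : ∃ i, m₁ i ≠ m₀ i := Function.ne_iff.1 hne
      set u : Fin n → ℂ := Pi.single i 1 with hu
      have hell : ∀ m : Fin n → ℤ, ell α u m = (m i : ℂ) + α i := by
        intro m
        rw [ell, Finset.sum_eq_single i]
        · simp [hu]
        · intro j _ hj; simp [hu, Pi.single_apply, hj]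
        · intro h; exact absurd (Finset.mem_univ i) h
      set c : ℂ := ell α u m₀ - ell α u m₁ with hc'
      have hc : c ≠ 0 := by
        rw [hc', hell, hell]
        have h2 : (m₀ i : ℂ) ≠ (m₁ i : ℂ) := by exact_mod_cast (Ne.symm hi)
        intro h
        apply h2
        linear_combination h
      set y : (Fin n → ℤ) →₀ V := Dop ρgl α u 0 x - ell α u m₁ • x with hy'
      have hy : y ∈ U := U.sub_mem (hDU u 0 x hx) (U.smul_mem _ hx)
      have hyapp : ∀ m, y m = (ell α u m - ell α u m₁) • x m := by
        intro m
        simp [hy', Dop_zero_apply, sub_smul]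
      have hysupp : y.support ⊆ x.support.erase m₁ := by
        intro m hm
        rw [Finsupp.mem_support_iff] at hm
        rw [Finset.mem_erase, Finsupp.mem_support_iff]
        constructor
        · rintro rfl; exact hm (by simp [hyapp])
        · intro h; exact hm (by simp [hyapp, h])
      have hcardlt : y.support.card < k := by
        calc y.support.card ≤ (x.support.erase m₁).card := Finset.card_le_card hysupp
        _ < x.support.card := Finset.card_erase_lt_of_mem hm₁
        _ = k := hcard
      have h1 := ih y.support.card hcardlt y rfl hy m₀
      rw [hyapp m₀, ← hc'] at h1
      have h2 := U.smul_mem c⁻¹ h1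
      rwa [Finsupp.smul_single, smul_smul, inv_mul_cancel₀ hc, one_smul] at h2

end

end Stmt13

theorem stmt13 (n : ℕ) (V : Type*) [AddCommGroup V] [Module ℂ V] [Nontrivial V]
    [FiniteDimensional ℂ V]
    -- V = V(ψ,b) is an irreducible finite-dimensional gl_n-module:
    (ρgl : Matrix (Fin n) (Fin n) ℂ →ₗ[ℂ] Module.End ℂ V)
    (hρgl : ∀ M N : Matrix (Fin n) (Fin n) ℂ, ρgl ⁅M, N⁆ = ⁅ρgl M, ρgl N⁆)
    (hVirr : ∀ U : Submodule ℂ V, (∀ M v, v ∈ U → ρgl M v ∈ U) → U = ⊥ ∨ U = ⊤)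
    (α : Fin n → ℂ) :
    ∃ (D : (Fin n → ℂ) → (Fin n → ℤ) → Module.End ℂ ((Fin n → ℤ) →₀ V))
      (T : (Fin n → ℤ) → Module.End ℂ ((Fin n → ℤ) →₀ V)),
      -- Larsson's action of Der A:
      (∀ (u : Fin n → ℂ) (r m : Fin n → ℤ) (v : V),
        D u r (Finsupp.single m v) =
          Finsupp.single (m + r)
            ((∑ i, u i * ((m i : ℂ) + α i)) • v +
              ρgl (Matrix.of fun j i => u i * (r j : ℂ)) v)) ∧
      -- the action t^r · v(m) = v(m+r) of A:
      (∀ (r m : Fin n → ℤ) (v : V), T r (Finsupp.single m v) = Finsupp.single (m + r) v) ∧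
      -- Der A acts as a Lie algebra:
      (∀ (u v : Fin n → ℂ) (r s : Fin n → ℤ),
        ⁅D u r, D v s⁆ =
          D ((∑ i, u i * (s i : ℂ)) • v - (∑ i, v i * (r i : ℂ)) • u) (r + s)) ∧
      -- the semidirect-product relations [D(u,r), t^m] = (u,m) t^{r+m}, [t^r,t^s] = 0:
      (∀ (u : Fin n → ℂ) (r m : Fin n → ℤ),
        ⁅D u r, T m⁆ = (∑ i, u i * (m i : ℂ)) • T (r + m)) ∧
      (∀ r s : Fin n → ℤ, ⁅T r, T s⁆ = 0) ∧
      -- F^α(ψ,b) is an irreducible A ⋊ Der A-module: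
      (∀ U : Submodule ℂ ((Fin n → ℤ) →₀ V),
        (∀ (u : Fin n → ℂ) (r : Fin n → ℤ) x, x ∈ U → D u r x ∈ U) →
        (∀ (r : Fin n → ℤ) x, x ∈ U → T r x ∈ U) → U = ⊥ ∨ U = ⊤) := by
  classical
  open Stmt13 in
  refine ⟨Dop ρgl α, Top, fun u r m v => Dop_single ρgl α u r m v,
    fun r m v => Top_single r m v, bracket_DD ρgl α hρgl, bracket_DT ρgl α,
    bracket_TT, ?_⟩
  intro U hDU hTU
  by_cases hU : U = ⊥
  · exact Or.inl hU
  right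
  obtain ⟨x, hxU, hxne⟩ := Submodule.ne_bot_iff U |>.1 hU
  obtain ⟨m₀, hm₀⟩ : ∃ m₀, x m₀ ≠ 0 := by
    by_contra h
    push_neg at h
    exact hxne (Finsupp.ext h)
  have hsingle₀ : Finsupp.single m₀ (x m₀) ∈ U :=
    Stmt13.sep ρgl α U hDU x.support.card x rfl hxU m₀
  set W : Submodule ℂ V := U.comap ((Finsupp.lsingle (0 : Fin n → ℤ)) : V →ₗ[ℂ] _) with hW
  have hWmem : ∀ v : V, v ∈ W ↔ Finsupp.single (0 : Fin n → ℤ) v ∈ U := fun v => Iff.rfl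
  have hshift : ∀ (m m' : Fin n → ℤ) (v : V),
      Finsupp.single m v ∈ U → Finsupp.single m' v ∈ U := by
    intro m m' v h
    have h2 := hTU (m' - m) _ h
    rwa [Stmt13.Top_single, add_sub_cancel] at h2
  have hv₀W : x m₀ ∈ W := (hWmem _).2 (hshift m₀ 0 _ hsingle₀)
  have hWinv : ∀ M vv, vv ∈ W → ρgl M vv ∈ W := by
    intro M v hv
    have key : ∀ (u : Fin n → ℂ) (r : Fin n → ℤ), ρgl (Stmt13.mat u r) v ∈ W := by
      intro u r
      have h1 : Finsupp.single (-r) v ∈ U := hshift 0 (-r) v ((hWmem v).1 hv)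
      have h2 := hDU u r _ h1
      rw [Stmt13.Dop_single, neg_add_cancel] at h2
      have h3 : Stmt13.ell α u (-r) • v + ρgl (Stmt13.mat u r) v ∈ W := (hWmem _).2 h2
      have h4 := W.sub_mem h3 (W.smul_mem (Stmt13.ell α u (-r)) hv)
      simpa using h4
    have hstd : ∀ j k : Fin n, ρgl (Matrix.single j k (1 : ℂ)) v ∈ W := by
      intro j k
      have heq : Matrix.single j k (1 : ℂ) =
          Stmt13.mat (Pi.single k 1) (Pi.single j 1) := by
        ext a b
        simp only [Matrix.single, Stmt13.mat, Matrix.of_apply, Pi.single_apply]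
        by_cases h1 : j = a <;> by_cases h2 : k = b <;>
          simp [h1, h2, eq_comm]
      rw [heq]
      exact key _ _
    have hM : M = ∑ j, ∑ k, Matrix.single j k (M j k) :=
      Matrix.matrix_eq_sum_single M
    rw [hM, map_sum, LinearMap.coe_sum, Finset.sum_apply]
    refine W.sum_mem fun j _ => ?_
    rw [map_sum, LinearMap.coe_sum, Finset.sum_apply]
    refine W.sum_mem fun k _ => ?_
    have : Matrix.single j k (M j k) = M j k • Matrix.single j k (1 : ℂ) := by
      rw [Matrix.smul_single, smul_eq_mul, mul_one]
    rw [this, map_smul, LinearMap.smul_apply]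
    exact W.smul_mem _ (hstd j k)
  rcases hVirr W hWinv with h | h
  · exact absurd (by rw [h] at hv₀W; simpa using hv₀W) hm₀
  · rw [eq_top_iff]
    rintro z -
    refine Finsupp.induction_linear z U.zero_mem (fun f g hf hg => U.add_mem hf hg)
      (fun a b => ?_)
    exact hshift 0 a b ((hWmem b).1 (h ▸ Submodule.mem_top))
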